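/- For m ≥ 2 even and A > 0, there is no convex function f ∈ C^m(ℝ²) such that D^k f(0,y) = 0 for all k ∈ {0,…,m−1} and all y ∈ [0,1], D^m f(0,0) = 0, D^m f(0,1) = 0, and D^m f(0, 1/2) = A · (e₁*)^{⊗m}. -/

import Mathlib

/-- The point `(0, y)` of `ℝ²`. -/
noncomputable def pt (y : ℝ) : EuclideanSpace ℝ (Fin 2) :=
  (WithLp.equiv 2 (Fin 2 → ℝ)).symm ![0, y]

open Set

/-- For a globally `C^m` function, the iterated derivative within a set with unique
differentiability coincides with the global iterated derivative. -/
lemma iterDerivWithin_eq_iterDeriv {f : ℝ → ℝ} {n m : ℕ} (hf : ContDiff ℝ (m : ℕ∞) f)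
    (hn : n ≤ m) {s : Set ℝ} (hs : UniqueDiffOn ℝ s) {x : ℝ} (hx : x ∈ s) :
    iteratedDerivWithin n f s x = iteratedDeriv n f x := by
  have h := (contDiff_iff_ftaylorSeries.mp hf).hasFTaylorSeriesUpToOn s
  rw [iteratedDerivWithin_eq_iteratedFDerivWithin, iteratedDeriv_eq_iteratedFDeriv,
    ← h.eq_iteratedFDerivWithin_of_uniqueDiffOn (by exact_mod_cast hn) hs hx]
  rfl

/-- Iterated derivatives of a `C^m` function along a line. -/
lemma iterDeriv_line {E : Type*} [NormedAddCommGroup E] [NormedSpace ℝ E]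
    {f : E → ℝ} {m : ℕ} (hf : ContDiff ℝ (m : ℕ∞) f) (c v : E) {k : ℕ} (hk : k ≤ m) (t : ℝ) :
    iteratedDeriv k (fun s : ℝ => f (c + s • v)) t
      = iteratedFDeriv ℝ k f (c + t • v) (fun _ => v) := by
  induction k generalizing t with
  | zero => simp
  | succ k ih =>
    have hk' : k < m := lt_of_lt_of_le (Nat.lt_succ_self k) hk
    have hdiff : Differentiable ℝ (iteratedFDeriv ℝ k f) :=
      hf.differentiable_iteratedFDeriv (by exact_mod_cast hk')
    rw [iteratedDeriv_succ]
    have hfun : iteratedDeriv k (fun s : ℝ => f (c + s • v))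
        = fun s : ℝ => iteratedFDeriv ℝ k f (c + s • v) (fun _ => v) := by
      funext s; exact ih (le_of_lt hk') s
    rw [hfun]
    have hγ : HasDerivAt (fun s : ℝ => c + s • v) v t := by
      simpa using ((hasDerivAt_id t).smul_const v).const_add c
    have h1 : HasDerivAt (fun s : ℝ => iteratedFDeriv ℝ k f (c + s • v))
        (fderiv ℝ (iteratedFDeriv ℝ k f) (c + t • v) v) t :=
      (hdiff (c + t • v)).hasFDerivAt.comp_hasDerivAt t hγ
    have h2 : HasDerivAt (fun s : ℝ => iteratedFDeriv ℝ k f (c + s • v) (fun _ => v))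
        ((fderiv ℝ (iteratedFDeriv ℝ k f) (c + t • v) v) (fun _ => v)) t :=
      (ContinuousMultilinearMap.apply ℝ (fun _ : Fin k => E) ℝ
        (fun _ => v)).hasFDerivAt.comp_hasDerivAt t h1
    rw [h2.deriv, iteratedFDeriv_succ_apply_left]
    congr 1

/-- For `m ≥ 2` even and `A > 0`, there is no convex `f ∈ Cᵐ(ℝ²)` such that `Dᵏf(0,y) = 0` for
all `k ≤ m-1` and `y ∈ [0,1]`, `Dᵐf(0,0) = Dᵐf(0,1) = 0`, and
`Dᵐf(0,1/2) = A·(e₁*)^{⊗m}`. -/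
theorem stmt_18 (m : ℕ) (hm : 2 ≤ m) (hmeven : Even m) (A : ℝ) (hA : 0 < A) :
    ¬ ∃ f : EuclideanSpace ℝ (Fin 2) → ℝ, ContDiff ℝ (m : ℕ∞) f ∧
        ConvexOn ℝ Set.univ f ∧
        (∀ y ∈ Set.Icc (0:ℝ) 1, ∀ k < m, iteratedFDeriv ℝ k f (pt y) = 0) ∧
        iteratedFDeriv ℝ m f (pt 0) = 0 ∧
        iteratedFDeriv ℝ m f (pt 1) = 0 ∧
        (∀ vs : Fin m → EuclideanSpace ℝ (Fin 2),
          iteratedFDeriv ℝ m f (pt (1/2)) vs = A * ∏ i, vs i 0) := by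
  rintro ⟨f, hfC, hconv, hlow, h0, h1, hmid⟩
  classical
  set v : EuclideanSpace ℝ (Fin 2) := (WithLp.equiv 2 (Fin 2 → ℝ)).symm ![1, 0] with hv
  -- the three 1-dimensional slices
  set g : ℝ → ℝ → ℝ := fun y t => f (pt y + t • v) with hg
  have hgC : ∀ y : ℝ, ContDiff ℝ (m : ℕ∞) (g y) := fun y =>
    hfC.comp (contDiff_const.add (contDiff_id.smul contDiff_const))
  -- h, the convexity defect
  set h : ℝ → ℝ := fun t => g (1/2) t - 2⁻¹ * (g 0 t + g 1 t) with hh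
  have hhC : ContDiff ℝ (m : ℕ∞) h :=
    (hgC (1/2)).sub (contDiff_const.mul ((hgC 0).add (hgC 1)))
  -- iterated derivatives of h
  have hderiv : ∀ k ≤ m, ∀ t : ℝ, iteratedDeriv k h t
      = iteratedDeriv k (g (1/2)) t - 2⁻¹ * (iteratedDeriv k (g 0) t + iteratedDeriv k (g 1) t) := by
    intro k hk t
    have hku : UniqueDiffOn ℝ (Set.univ : Set ℝ) := uniqueDiffOn_univ
    have hmem : t ∈ (Set.univ : Set ℝ) := mem_univ t
    have e1 : ContDiffOn ℝ k (g (1/2)) Set.univ := ((hgC _).of_le (by exact_mod_cast hk)).contDiffOn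
    have e0 : ContDiffOn ℝ k (g 0) Set.univ := ((hgC _).of_le (by exact_mod_cast hk)).contDiffOn
    have e2 : ContDiffOn ℝ k (g 1) Set.univ := ((hgC _).of_le (by exact_mod_cast hk)).contDiffOn
    have hfun : h = g (1/2) - (2⁻¹ : ℝ) • (g 0 + g 1) := by
      funext s
      simp only [hh, Pi.sub_apply, Pi.smul_apply, Pi.add_apply, smul_eq_mul]
    have e01 : ContDiffOn ℝ (k : ℕ∞) (g 0 + g 1) Set.univ := e0.add e2
    have e012 : ContDiffOn ℝ (k : ℕ∞) ((2⁻¹ : ℝ) • (g 0 + g 1)) Set.univ :=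
      contDiffOn_const.smul e01
    have : iteratedDerivWithin k h Set.univ t
        = iteratedDerivWithin k (g (1/2)) Set.univ t
          - 2⁻¹ * (iteratedDerivWithin k (g 0) Set.univ t + iteratedDerivWithin k (g 1) Set.univ t) := by
      rw [hfun, iteratedDerivWithin_sub hmem hku (e1 t hmem) (e012 t hmem)]
      rw [iteratedDerivWithin_const_smul hmem hku _ (e01 t hmem)]
      rw [iteratedDerivWithin_add hmem hku (e0 t hmem) (e2 t hmem)]
      simp [smul_eq_mul]
    simpa [iteratedDerivWithin_univ] using this
  -- values at 0
  have hv0 : v 0 = 1 := rfl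
  have hline : ∀ y : ℝ, ∀ k ≤ m, iteratedDeriv k (g y) 0 = iteratedFDeriv ℝ k f (pt y) (fun _ => v) := by
    intro y k hk
    have := iterDeriv_line hfC (pt y) v hk 0
    simpa using this
  have hlow' : ∀ y ∈ Set.Icc (0:ℝ) 1, ∀ k < m, iteratedDeriv k (g y) 0 = 0 := by
    intro y hy k hk
    rw [hline y k hk.le, hlow y hy k hk]
    simp
  have hzeroIcc : (0:ℝ) ∈ Set.Icc (0:ℝ) 1 := by constructor <;> norm_num
  have honeIcc : (1:ℝ) ∈ Set.Icc (0:ℝ) 1 := by constructor <;> norm_num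
  have hhalfIcc : (1/2:ℝ) ∈ Set.Icc (0:ℝ) 1 := by constructor <;> norm_num
  have hlowh : ∀ k < m, iteratedDeriv k h 0 = 0 := by
    intro k hk
    rw [hderiv k hk.le 0, hlow' _ hhalfIcc k hk, hlow' _ hzeroIcc k hk, hlow' _ honeIcc k hk]
    ring
  have hmh : iteratedDeriv m h 0 = A := by
    rw [hderiv m le_rfl 0, hline _ m le_rfl, hline _ m le_rfl, hline _ m le_rfl,
      h0, h1, hmid]
    simp [hv0]
  -- h ≤ 0 by convexity
  have hneg : ∀ t : ℝ, h t ≤ 0 := by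
    intro t
    have hptadd : pt (1/2) + t • v
        = (2⁻¹ : ℝ) • (pt 0 + t • v) + (2⁻¹ : ℝ) • (pt 1 + t • v) := by
      refine (WithLp.equiv 2 (Fin 2 → ℝ)).injective ?_
      funext i
      fin_cases i <;>
        simp [pt, hv, WithLp.equiv_apply, WithLp.equiv_symm_apply, PiLp.add_apply,
          PiLp.smul_apply, smul_eq_mul] <;> ring
    have := hconv.2 (mem_univ (pt 0 + t • v)) (mem_univ (pt 1 + t • v))
      (by norm_num : (0:ℝ) ≤ 2⁻¹) (by norm_num : (0:ℝ) ≤ 2⁻¹) (by norm_num : (2⁻¹:ℝ) + 2⁻¹ = 1)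
    rw [← hptadd] at this
    have : g (1/2) t ≤ 2⁻¹ * g 0 t + 2⁻¹ * g 1 t := by
      simpa [hg, smul_eq_mul] using this
    simp only [hh]
    linarith
  -- continuity: find δ with iteratedDeriv m h > A/2 near 0
  have hcont : Continuous (iteratedDeriv m h) := hhC.continuous_iteratedDeriv m le_rfl
  have hconA : ContinuousAt (iteratedDeriv m h) 0 := hcont.continuousAt
  obtain ⟨δ, hδpos, hδ⟩ := Metric.continuousAt_iff.mp hconA (A/2) (by linarith)
  -- pick t = δ/2
  set t : ℝ := δ/2 with ht
  have htpos : 0 < t := by positivity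
  have huniq : UniqueDiffOn ℝ (Set.Icc (0:ℝ) t) := uniqueDiffOn_Icc htpos
  have hwithin : ∀ k ≤ m, ∀ x ∈ Set.Icc (0:ℝ) t,
      iteratedDerivWithin k h (Set.Icc 0 t) x = iteratedDeriv k h x := fun k hk x hx =>
    iterDerivWithin_eq_iterDeriv hhC hk huniq hx
  have hm1 : m - 1 + 1 = m := by omega
  -- Taylor
  obtain ⟨x', hx', htaylor⟩ := taylor_mean_remainder_lagrange (f := h) (x₀ := 0) (x := t)
    (n := m - 1) htpos.ne
    ((hhC.of_le (Nat.cast_le.mpr (Nat.sub_le m 1))).contDiffOn)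
    (by
      rw [Set.uIcc_of_le htpos.le, Set.uIoo_of_lt htpos]
      have hmlt : m - 1 < m := by omega
      have hd : Differentiable ℝ (iteratedDeriv (m-1) h) :=
        hhC.differentiable_iteratedDeriv (m-1) (Nat.cast_lt.mpr hmlt)
      refine DifferentiableOn.congr (f := iteratedDeriv (m-1) h) (hd.differentiableOn) ?_
      intro x hx
      exact hwithin (m-1) (Nat.sub_le m 1) x (Set.mem_of_mem_of_subset hx Set.Ioo_subset_Icc_self))
  rw [Set.uIcc_of_le htpos.le] at htaylor
  rw [Set.uIoo_of_lt htpos] at hx'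
  -- Taylor polynomial is 0
  have hpoly : taylorWithinEval h (m-1) (Set.Icc 0 t) 0 t = 0 := by
    rw [taylor_within_apply]
    refine Finset.sum_eq_zero fun k hk => ?_
    have hk' : k < m := by
      have := Finset.mem_range.mp hk; omega
    rw [hwithin k hk'.le 0 (Set.left_mem_Icc.mpr htpos.le), hlowh k hk']
    simp
  rw [hpoly, sub_zero, hm1] at htaylor
  have hx'Icc : x' ∈ Set.Icc (0:ℝ) t := Set.mem_of_mem_of_subset hx' Set.Ioo_subset_Icc_self
  rw [hwithin m le_rfl x' hx'Icc] at htaylor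
  -- the m-th derivative at x' is large
  have hx'near : dist x' (0:ℝ) < δ := by
    rw [Real.dist_eq, sub_zero, abs_of_pos hx'.1]
    have := hx'.2; simp only [ht] at this ⊢; linarith
  have hbig : A/2 < iteratedDeriv m h x' := by
    have := hδ hx'near
    rw [Real.dist_eq, hmh] at this
    have := abs_lt.mp this
    linarith [this.1]
  -- contradiction
  have hfact : (0:ℝ) < ((Nat.factorial m : ℕ) : ℝ) := by exact_mod_cast Nat.factorial_pos m
  have hbig' : 0 < iteratedDeriv m h x' := by linarith
  have : 0 < h t := by
    rw [htaylor, sub_zero]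
    exact div_pos (mul_pos hbig' (by positivity)) hfact
  linarith [hneg t]
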